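/- Let F be the 2×2 matrix [[1,0],[1,1]] over GF(2) and F^{⊗n} its n-fold Kronecker power. Let I be a nonempty subset of {0, 1, …, 2^n − 1} and let C be the GF(2)-linear span of the rows of F^{⊗n} indexed by I. Then the minimum Hamming weight over all nonzero codewords of C equals min_{i∈I} 2^{w(i)}, where w(i) is the number of ones in the binary expansion of i. -/

import Mathlib

open Matrix

/-- The basic polarization matrix `F = [[1,0],[1,1]]` over `GF(2)`. -/
def polarF : Matrix (Fin 2) (Fin 2) (ZMod 2) := !![1, 0; 1, 1]

/-- The `n`-fold Kronecker power `F^{⊗n}` of `F`, a `2^n × 2^n` matrix over `GF(2)`,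
with indices identified with `{0, …, 2^n − 1}` via binary expansions. -/
def polarFPow : (n : ℕ) → Matrix (Fin (2 ^ n)) (Fin (2 ^ n)) (ZMod 2)
  | 0 => fun _ _ => 1
  | n + 1 =>
      Matrix.reindex
        (finProdFinEquiv.trans (finCongr (by rw [pow_succ, Nat.mul_comm])))
        (finProdFinEquiv.trans (finCongr (by rw [pow_succ, Nat.mul_comm])))
        (Matrix.kroneckerMap (· * ·) polarF (polarFPow n))

/-- Hamming weight of the binary expansion of a natural number. -/
def hammingWt (i : ℕ) : ℕ := (Nat.digits 2 i).count 1

/-- Hamming weight (number of nonzero coordinates) of a vector over `GF(2)`. -/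
def codewordWt {N : ℕ} (c : Fin N → ZMod 2) : ℕ :=
  (Finset.univ.filter (fun j => c j ≠ 0)).card

/-! ### Auxiliary lemmas -/

/-- The index identification `Fin 2 × Fin (2^n) ≃ Fin (2^(n+1))` used in `polarFPow`. -/
def pe (n : ℕ) : Fin 2 × Fin (2 ^ n) ≃ Fin (2 ^ (n+1)) :=
  finProdFinEquiv.trans (finCongr (by rw [pow_succ, Nat.mul_comm]))

lemma pe_val (n : ℕ) (b : Fin 2) (i : Fin (2^n)) :
    ((pe n (b, i)) : ℕ) = i.val + 2^n * b.val := rfl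

lemma polarFPow_apply (n : ℕ) (b b' : Fin 2) (i j : Fin (2^n)) :
    polarFPow (n+1) (pe n (b,i)) (pe n (b',j)) = polarF b b' * polarFPow n i j := by
  simp [polarFPow, pe, Matrix.kroneckerMap]

lemma hammingWt_bit (m r : ℕ) (hr : r < 2) : hammingWt (2 * m + r) = hammingWt m + r := by
  rcases Nat.eq_zero_or_pos (2 * m + r) with h | h
  · interval_cases r <;> simp_all [hammingWt]
  · unfold hammingWt
    rw [Nat.digits_def' (by norm_num) h]
    have h1 : (2 * m + r) % 2 = r := by omega
    have h2 : (2 * m + r) / 2 = m := by omega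
    rw [h1, h2, List.count_cons]
    interval_cases r <;> simp

lemma hammingWt_add_pow (n i : ℕ) (h : i < 2 ^ n) :
    hammingWt (i + 2 ^ n) = hammingWt i + 1 := by
  induction n generalizing i with
  | zero =>
    interval_cases i
    simp [hammingWt]
  | succ n ih =>
    have h2 : i + 2 ^ (n+1) = 2 * (i / 2 + 2 ^ n) + i % 2 := by
      have := Nat.div_add_mod i 2; ring_nf; omega
    have h3 : i = 2 * (i / 2) + i % 2 := by omega
    rw [h2, hammingWt_bit _ _ (Nat.mod_lt _ (by norm_num)), ih _ (by omega)]
    conv_rhs => rw [h3, hammingWt_bit _ _ (Nat.mod_lt _ (by norm_num))]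
    omega

lemma codewordWt_split (n : ℕ) (c : Fin (2^(n+1)) → ZMod 2) :
    codewordWt c
      = codewordWt (fun j => c (pe n (0,j))) + codewordWt (fun j => c (pe n (1,j))) := by
  unfold codewordWt
  rw [Finset.card_filter, Finset.card_filter, Finset.card_filter]
  rw [← Fintype.sum_equiv (pe n) _ (fun j => if c j ≠ 0 then 1 else 0) (fun p => rfl)]
  rw [Fintype.sum_prod_type, Fin.sum_univ_two]

lemma codewordWt_add_le {N : ℕ} (a b : Fin N → ZMod 2) :
    codewordWt (fun j => a j + b j) ≤ codewordWt a + codewordWt b := by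
  unfold codewordWt
  refine le_trans (Finset.card_le_card ?_) (Finset.card_union_le _ _)
  intro j hj
  simp only [Finset.mem_filter, Finset.mem_union, Finset.mem_univ, true_and] at *
  by_contra hc
  push_neg at hc
  simp [hc.1, hc.2] at hj

lemma codewordWt_congr {N : ℕ} {a b : Fin N → ZMod 2} (h : ∀ j, a j = b j) :
    codewordWt a = codewordWt b := by
  congr 1; exact funext h

lemma sum_split (n : ℕ) {M : Type*} [AddCommMonoid M] (S : Finset (Fin (2^(n+1))))
    (f : Fin (2^(n+1)) → M) :
    ∑ i ∈ S, f i =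
      (∑ i' ∈ Finset.univ.filter (fun i' => pe n (0,i') ∈ S), f (pe n (0,i'))) +
      (∑ i' ∈ Finset.univ.filter (fun i' => pe n (1,i') ∈ S), f (pe n (1,i'))) := by
  have h1 : ∑ i ∈ S, f i = ∑ i : Fin (2^(n+1)), if i ∈ S then f i else 0 := by
    rw [Finset.sum_ite_mem, Finset.univ_inter]
  rw [h1, ← Fintype.sum_equiv (pe n) _ (fun i => if i ∈ S then f i else 0) (fun p => rfl),
    Fintype.sum_prod_type, Fin.sum_univ_two, Finset.sum_filter, Finset.sum_filter]

lemma polarF00 : polarF 0 0 = 1 := rfl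
lemma polarF01 : polarF 0 1 = 0 := rfl
lemma polarF10 : polarF 1 0 = 1 := rfl
lemma polarF11 : polarF 1 1 = 1 := rfl

/-- Weight of a single row of `polarFPow n`. -/
lemma codewordWt_row (n : ℕ) (i : Fin (2^n)) :
    codewordWt (fun j => polarFPow n i j) = 2 ^ hammingWt i.val := by
  induction n with
  | zero =>
    have hi : i.val = 0 := by omega
    have h2 : hammingWt 0 = 0 := by simp [hammingWt]
    simp [hi, h2, codewordWt, polarFPow]
  | succ n ih =>
    obtain ⟨⟨b, i'⟩, rfl⟩ := (pe n).surjective i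
    rw [codewordWt_split]
    rcases (by omega : b = 0 ∨ b = 1) with rfl | rfl
    · have h0 : (fun j => polarFPow (n+1) (pe n (0, i')) (pe n (0,j)))
          = fun j => polarFPow n i' j := by
        funext j; rw [polarFPow_apply, polarF00, one_mul]
      have h1 : (fun j => polarFPow (n+1) (pe n (0, i')) (pe n (1,j)))
          = fun j => (0 : ZMod 2) := by
        funext j; rw [polarFPow_apply, polarF01, zero_mul]
      rw [h0, h1, ih]
      have hw : ((pe n (0, i')) : ℕ) = i'.val := by rw [pe_val]; simp
      rw [hw]
      simp [codewordWt]
    · have h0 : (fun j => polarFPow (n+1) (pe n (1, i')) (pe n (0,j)))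
          = fun j => polarFPow n i' j := by
        funext j; rw [polarFPow_apply, polarF10, one_mul]
      have h1 : (fun j => polarFPow (n+1) (pe n (1, i')) (pe n (1,j)))
          = fun j => polarFPow n i' j := by
        funext j; rw [polarFPow_apply, polarF11, one_mul]
      rw [h0, h1, ih]
      have hw : ((pe n (1, i')) : ℕ) = i'.val + 2^n := by rw [pe_val]; simp
      rw [hw, hammingWt_add_pow n i'.val i'.isLt]
      ring

/-- Key lower bound: any nonempty subset-sum of rows has weight at least
`2 ^ hammingWt i` for some `i` in the subset. -/
lemma key_lower (n : ℕ) (S : Finset (Fin (2^n))) (hS : S.Nonempty) :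
    ∃ i ∈ S, 2 ^ hammingWt i.val ≤ codewordWt (fun j => ∑ i ∈ S, polarFPow n i j) := by
  induction n with
  | zero =>
    obtain ⟨i, hi⟩ := hS
    refine ⟨i, hi, ?_⟩
    have hi0 : i.val = 0 := by omega
    have hcard : S.card = 1 := le_antisymm (by simpa using S.card_le_univ) (by
      exact Finset.Nonempty.card_pos ⟨i, hi⟩)
    have hne : (∑ k ∈ S, polarFPow 0 k i) ≠ 0 := by
      have : ∀ k ∈ S, polarFPow 0 k i = 1 := fun _ _ => rfl
      rw [Finset.sum_congr rfl this, Finset.sum_const, hcard]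
      decide
    have : 0 < codewordWt (fun j => ∑ i ∈ S, polarFPow 0 i j) := by
      refine Finset.card_pos.mpr ⟨i, ?_⟩
      simp only [Finset.mem_filter, Finset.mem_univ, true_and]
      exact hne
    rw [hi0]
    simpa [hammingWt] using (show 1 ≤ codewordWt (fun j => ∑ i ∈ S, polarFPow 0 i j) from this)
  | succ n ih =>
    set T0 : Finset (Fin (2^n)) := Finset.univ.filter (fun i' => pe n (0,i') ∈ S) with hT0
    set T1 : Finset (Fin (2^n)) := Finset.univ.filter (fun i' => pe n (1,i') ∈ S) with hT1
    set u : Fin (2^n) → ZMod 2 := fun j => ∑ i' ∈ T0, polarFPow n i' j with hu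
    set v : Fin (2^n) → ZMod 2 := fun j => ∑ i' ∈ T1, polarFPow n i' j with hv
    have hc0 : ∀ j, (∑ i ∈ S, polarFPow (n+1) i (pe n (0,j))) = u j + v j := by
      intro j
      rw [sum_split n S (fun i => polarFPow (n+1) i (pe n (0,j)))]
      simp only [polarFPow_apply, polarF00, polarF10, one_mul, ← hT0, ← hT1]
      rfl
    have hc1 : ∀ j, (∑ i ∈ S, polarFPow (n+1) i (pe n (1,j))) = v j := by
      intro j
      rw [sum_split n S (fun i => polarFPow (n+1) i (pe n (1,j)))]
      simp only [polarFPow_apply, polarF01, polarF11, one_mul, zero_mul, ← hT0, ← hT1]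
      simp
      rfl
    have hwt : codewordWt (fun j => ∑ i ∈ S, polarFPow (n+1) i j)
        = codewordWt (fun j => u j + v j) + codewordWt v := by
      rw [codewordWt_split n (fun j => ∑ i ∈ S, polarFPow (n+1) i j)]
      congr 1
      · exact codewordWt_congr hc0
      · exact codewordWt_congr hc1
    rcases T0.eq_empty_or_nonempty with hT0e | hT0ne
    · -- T0 empty: u = 0
      have hT1ne : T1.Nonempty := by
        obtain ⟨i, hi⟩ := hS
        obtain ⟨⟨b, i'⟩, rfl⟩ := (pe n).surjective i
        rcases (by omega : b = 0 ∨ b = 1) with rfl | rfl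
        · exact absurd (Finset.eq_empty_iff_forall_notMem.mp hT0e i'
            (by simp [hT0, hi])) (fun h => h)
        · exact ⟨i', by simp [hT1, hi]⟩
      obtain ⟨i', hi', hle⟩ := ih T1 hT1ne
      rw [← hv] at hle
      refine ⟨pe n (1, i'), by simpa [hT1] using hi', ?_⟩
      have hval : ((pe n (1, i')) : ℕ) = i'.val + 2^n := by rw [pe_val]; simp
      rw [hval, hammingWt_add_pow n i'.val i'.isLt, hwt]
      have hu0 : ∀ j, u j + v j = v j := by
        intro j; rw [hu]; simp [hT0e]
      rw [codewordWt_congr hu0]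
      have : (2:ℕ) ^ (hammingWt i'.val + 1) = 2 ^ hammingWt i'.val + 2 ^ hammingWt i'.val := by
        ring
      omega
    · -- T0 nonempty
      obtain ⟨i', hi', hle⟩ := ih T0 hT0ne
      rw [← hu] at hle
      refine ⟨pe n (0, i'), by simpa [hT0] using hi', ?_⟩
      have hval : ((pe n (0, i')) : ℕ) = i'.val := by rw [pe_val]; simp
      rw [hval, hwt]
      have huvv : ∀ j, (fun j => u j + v j) j + v j = u j := by
        intro j
        have : ∀ a b : ZMod 2, a + b + b = a := by decide
        exact this (u j) (v j)
      calc 2 ^ hammingWt i'.val ≤ codewordWt u := hle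
        _ = codewordWt (fun j => (fun j => u j + v j) j + v j) :=
            (codewordWt_congr huvv).symm
        _ ≤ codewordWt (fun j => u j + v j) + codewordWt v :=
            codewordWt_add_le _ _

theorem min_distance_polar_code (n : ℕ) (I : Finset (Fin (2 ^ n))) (hI : I.Nonempty) :
    IsLeast {k : ℕ | ∃ c ∈ Submodule.span (ZMod 2) ((fun i => polarFPow n i) '' ↑I),
        c ≠ 0 ∧ codewordWt c = k}
      (I.inf' hI (fun i => 2 ^ hammingWt i.val)) := by
  constructor
  · -- membership
    obtain ⟨i₀, hi₀, hinf⟩ := Finset.exists_mem_eq_inf' hI (fun i => 2 ^ hammingWt i.val)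
    refine ⟨polarFPow n i₀, Submodule.subset_span ⟨i₀, hi₀, rfl⟩, ?_, ?_⟩
    · intro h0
      have : codewordWt (fun j => polarFPow n i₀ j) = 2 ^ hammingWt i₀.val :=
        codewordWt_row n i₀
      rw [show (fun j => polarFPow n i₀ j) = polarFPow n i₀ from rfl, h0] at this
      have hz : codewordWt (0 : Fin (2^n) → ZMod 2) = 0 := by simp [codewordWt]
      rw [hz] at this
      exact (pow_pos (by norm_num : (0:ℕ) < 2) _).ne' this.symm
    · rw [hinf]
      exact codewordWt_row n i₀
  · -- lower bound
    rintro k ⟨c, hc, hcne, rfl⟩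
    rw [Finsupp.mem_span_image_iff_linearCombination] at hc
    obtain ⟨l, hl, rfl⟩ := hc
    rw [Finsupp.mem_supported] at hl
    set S := l.support with hSdef
    have hsum : ∀ j, Finsupp.linearCombination (ZMod 2) (fun i => polarFPow n i) l j
        = ∑ i ∈ S, polarFPow n i j := by
      intro j
      rw [Finsupp.linearCombination_apply, Finsupp.sum]
      rw [Finset.sum_apply]
      refine Finset.sum_congr rfl fun i hi => ?_
      have hne : l i ≠ 0 := Finsupp.mem_support_iff.mp hi
      have h1 : l i = 1 := by revert hne; generalize l i = a; revert a; decide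
      rw [h1, one_smul]
    have hSne : S.Nonempty := by
      rw [Finset.nonempty_iff_ne_empty]
      intro hS
      apply hcne
      have : l = 0 := Finsupp.support_eq_empty.mp hS
      rw [this]
      simp
    obtain ⟨i, hiS, hle⟩ := key_lower n S hSne
    have hiI : i ∈ I := hl hiS
    refine le_trans (Finset.inf'_le _ hiI) ?_
    refine le_trans hle ?_
    have : (fun j => ∑ i ∈ S, polarFPow n i j)
        = Finsupp.linearCombination (ZMod 2) (fun i => polarFPow n i) l := by
      funext j; rw [hsum]
    rw [this]
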